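/- Fix real parameters M>0, l>0, a with |a|<l, and α<9/4, let E ∈ (1/l², V_max), and let δ>0 be such that [E−δ, E+δ] ⊂ (1/l², V_max). Then there exist constants D>0, δ′>0 with x_max + δ′ < π/2, and H₀>0, all depending only on M, l, a, α (and E, δ), such that for every h ∈ (0,H₀], every κ ∈ (1/l², E+δ], and every nonzero twice continuously differentiable u : [x_max, π/2) → ℝ satisfying −h²·u″ + (V_σ∘R + h²·(V_junk∘R + V_mass∘R))·u = κ·u on (x_max,π/2), u(x_max)=0, and ∫_{x_max}^{π/2}(|u′|² + R²·u²) dx < ∞, one has ∫_{x_max}^{x_max+δ′} (|u′(x)|² + u(x)²) dx ≤ D·e^{−D/h}·∫_{x_max}^{π/2} u(x)² dx. -/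

import Mathlib

open Real MeasureTheory Set Filter Topology

/-- Δ₋(r) = (1+r²/l²)(r²+a²) − 2Mr -/
noncomputable def Dm (M l a r : ℝ) : ℝ := (1 + r^2/l^2)*(r^2+a^2) - 2*M*r

/-- V_σ(r) = Δ₋(r)/(r²+a²)² -/
noncomputable def Vsig (M l a r : ℝ) : ℝ := Dm M l a r / (r^2+a^2)^2

/-- Θ(α) = 1 if α>0, 0 if α≤0 -/
noncomputable def Th (α : ℝ) : ℝ := if 0 < α then 1 else 0

/-- V_junk -/
noncomputable def Vjunk (M l a α r : ℝ) : ℝ :=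
  -(3*r^2*(Dm M l a r)^2/(r^2+a^2)^4)
  + Dm M l a r * (5*r^4/l^2 + 3*r^2*(1+a^2/l^2) - 4*M*r + a^2)/(r^2+a^2)^3
  - (2/l^2) * (Dm M l a r * r^2/(r^2+a^2)^2)
  - (α/l^2) * (Dm M l a r /(r^2+a^2)^2) * Th α * a^2

/-- V_mass -/
noncomputable def Vmass (M l a α r : ℝ) : ℝ :=
  ((2-α)/l^2) * (Dm M l a r * r^2/(r^2+a^2)^2)

/-- The full potential in the tortoise coordinate, with semiclassical parameter h. -/
noncomputable def Vfull (M l a α : ℝ) (R : ℝ → ℝ) (h x : ℝ) : ℝ :=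
  Vsig M l a (R x) + h^2 * (Vjunk M l a α (R x) + Vmass M l a α (R x))

/-- κ is an eigenvalue of the Dirichlet problem P_DD(h). -/
def IsDirichletEigenvalue (M l a α : ℝ) (R : ℝ → ℝ) (xmax h κ : ℝ) : Prop :=
  ∃ u : ℝ → ℝ,
    (∃ x ∈ Set.Ico xmax (π/2), u x ≠ 0) ∧
    ContDiffOn ℝ 2 u (Set.Ico xmax (π/2)) ∧
    (∀ x ∈ Set.Ioo xmax (π/2),
      -h^2 * deriv (deriv u) x + Vfull M l a α R h x * u x = κ * u x) ∧
    u xmax = 0 ∧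
    MeasureTheory.IntegrableOn (fun x => (deriv u x)^2 + (R x)^2 * (u x)^2)
      (Set.Ioo xmax (π/2))


set_option maxHeartbeats 2000000

/-- Core comparison lemma: if `u` satisfies a convexity-type differential inequality
on `[A,B']` with `u A = 0`, then `exp(-lam x) * u x ^ 2` and `u x ^ 2` are monotone. -/
lemma agmon_mono (u v v2 : ℝ → ℝ) (A B' lam : ℝ) (hlam : 0 ≤ lam)
    (hu : ContinuousOn u (Icc A B')) (hv : ContinuousOn v (Icc A B'))
    (huv : ∀ x ∈ Ioo A B', HasDerivAt u (v x) x)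
    (hvv : ∀ x ∈ Ioo A B', HasDerivAt v (v2 x) x)
    (hode : ∀ x ∈ Ioo A B', lam^2 * (u x)^2 ≤ 2 * u x * v2 x)
    (huA : u A = 0) :
    MonotoneOn (fun x => Real.exp (-(lam*x)) * (u x)^2) (Icc A B')
    ∧ MonotoneOn (fun x => (u x)^2) (Icc A B') := by
  set g : ℝ → ℝ := fun x => Real.exp (lam*x) * (2 * u x * v x - lam * (u x)^2) with hg
  have hgd : ∀ x ∈ Ioo A B', HasDerivAt g
      (Real.exp (lam*x) * (2*(v x)^2 + 2*u x*v2 x - lam^2*(u x)^2)) x := by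
    intro x hx
    have h1 : HasDerivAt (fun x => Real.exp (lam*x)) (lam * Real.exp (lam*x)) x := by
      simpa [mul_comm] using ((hasDerivAt_id x).const_mul lam).exp
    have h2 : HasDerivAt (fun x => 2 * u x * v x - lam * (u x)^2)
        (2 * (v x)^2 + 2 * u x * v2 x - lam * (2 * u x * v x)) x := by
      have hu' := huv x hx
      have hv' := hvv x hx
      have : HasDerivAt (fun x => 2 * u x * v x)
          (2 * v x * v x + 2 * u x * v2 x) x := by
        exact ((hu'.const_mul 2).mul hv')
      have h3 : HasDerivAt (fun x => lam * (u x)^2) (lam * (2 * u x * v x)) x := by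
        have := (hu'.pow 2)
        simpa [mul_comm, mul_assoc, mul_left_comm] using this.const_mul lam
      exact (this.sub h3).congr_deriv (by ring)
    have := h1.mul h2
    exact this.congr_deriv (by ring)
  have hgc : ContinuousOn g (Icc A B') := by
    apply ContinuousOn.mul
    · exact (Real.continuous_exp.comp (continuous_const.mul continuous_id)).continuousOn
    · exact ((continuousOn_const.mul hu).mul hv).sub (continuousOn_const.mul (hu.pow 2))
  have hgmono : MonotoneOn g (Icc A B') := by
    apply monotoneOn_of_deriv_nonneg (convex_Icc A B') hgc
    · intro x hx
      rw [interior_Icc] at hx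
      exact (hgd x hx).differentiableAt.differentiableWithinAt
    · intro x hx
      rw [interior_Icc] at hx
      rw [(hgd x hx).deriv]
      have h1 := hode x hx
      have : (0:ℝ) ≤ 2*(v x)^2 + 2*u x*v2 x - lam^2*(u x)^2 := by nlinarith [sq_nonneg (v x)]
      positivity
  have hgnonneg : ∀ x ∈ Icc A B', 0 ≤ 2 * u x * v x - lam * (u x)^2 := by
    intro x hx
    rcases le_or_gt B' A with hBA | hAB
    · have : x = A := le_antisymm (hx.2.trans hBA) hx.1
      simp [this, huA]
    · have hA : A ∈ Icc A B' := ⟨le_refl _, hAB.le⟩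
      have := hgmono hA hx hx.1
      have hgA : g A = 0 := by simp [hg, huA]
      rw [hgA] at this
      have hexp : 0 < Real.exp (lam*x) := Real.exp_pos _
      have heq : 2 * u x * v x - lam * (u x)^2 = g x / Real.exp (lam*x) := by
        rw [hg]; field_simp
      rw [heq]
      exact div_nonneg this hexp.le
  constructor
  · apply monotoneOn_of_deriv_nonneg (convex_Icc A B')
    · exact (Real.continuous_exp.comp (continuous_const.mul continuous_id).neg).continuousOn.mul (hu.pow 2)
    · intro x hx
      rw [interior_Icc] at hx
      have h1 : HasDerivAt (fun x => Real.exp (-(lam*x)) * (u x)^2)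
          (Real.exp (-(lam*x)) * (2 * u x * v x - lam * (u x)^2)) x := by
        have he : HasDerivAt (fun x => Real.exp (-(lam*x))) (-lam * Real.exp (-(lam*x))) x := by
          simpa [mul_comm] using (((hasDerivAt_id x).const_mul lam).neg).exp
        have hp : HasDerivAt (fun x => (u x)^2) (2 * u x * v x) x := by
          have := (huv x hx).pow 2
          exact this.congr_deriv (by norm_num)
        exact (he.mul hp).congr_deriv (by ring)
      exact h1.differentiableAt.differentiableWithinAt
    · intro x hx
      rw [interior_Icc] at hx
      have h1 : HasDerivAt (fun x => Real.exp (-(lam*x)) * (u x)^2)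
          (Real.exp (-(lam*x)) * (2 * u x * v x - lam * (u x)^2)) x := by
        have he : HasDerivAt (fun x => Real.exp (-(lam*x))) (-lam * Real.exp (-(lam*x))) x := by
          simpa [mul_comm] using (((hasDerivAt_id x).const_mul lam).neg).exp
        have hp : HasDerivAt (fun x => (u x)^2) (2 * u x * v x) x := by
          have := (huv x hx).pow 2
          exact this.congr_deriv (by norm_num)
        exact (he.mul hp).congr_deriv (by ring)
      rw [h1.deriv]
      have := hgnonneg x (Ioo_subset_Icc_self hx)
      positivity
  · apply monotoneOn_of_deriv_nonneg (convex_Icc A B') (hu.pow 2)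
    · intro x hx
      rw [interior_Icc] at hx
      exact ((huv x hx).pow 2).differentiableAt.differentiableWithinAt
    · intro x hx
      rw [interior_Icc] at hx
      rw [((huv x hx).pow 2).deriv]
      have h2 := hgnonneg x (Ioo_subset_Icc_self hx)
      have h3 : 0 ≤ lam * (u x)^2 := by positivity
      push_cast
      norm_num
      nlinarith

lemma contDm (M l a : ℝ) : Continuous (fun r : ℝ => Dm M l a r) := by
  unfold Dm; fun_prop

lemma contVsig (M l a : ℝ) {r : ℝ} (hne : r^2+a^2 ≠ 0) :
    ContinuousAt (fun r => Vsig M l a r) r := by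
  unfold Vsig
  exact ((contDm M l a).continuousAt).div
    ((continuous_pow 2 |>.comp ((continuous_pow 2).add continuous_const)).continuousAt)
    (pow_ne_zero 2 hne)

lemma contVJM (M l a α : ℝ) {r : ℝ} (hne : r^2+a^2 ≠ 0) :
    ContinuousAt (fun r => Vjunk M l a α r + Vmass M l a α r) r := by
  unfold Vjunk Vmass
  have hDm := (contDm M l a).continuousAt (x := r)
  have hp : ∀ n : ℕ, ContinuousAt (fun r : ℝ => (r^2+a^2)^n) r := by
    intro n; fun_prop
  have hpn : ∀ n : ℕ, n ≠ 0 → ((r:ℝ)^2+a^2)^n ≠ 0 := fun n _ => pow_ne_zero n hne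
  apply ContinuousAt.add
  apply ContinuousAt.sub
  apply ContinuousAt.sub
  apply ContinuousAt.add
  · exact ((ContinuousAt.mul (by fun_prop) (hDm.pow 2)).div (hp 4) (hpn 4 (by norm_num))).neg
  · exact ((hDm.mul (by fun_prop)).div (hp 3) (hpn 3 (by norm_num)))
  · exact ContinuousAt.mul continuousAt_const ((hDm.mul (by fun_prop)).div (hp 2) (hpn 2 (by norm_num)))
  · exact ContinuousAt.mul (ContinuousAt.mul (ContinuousAt.mul continuousAt_const
      ((hDm.div (hp 2) (hpn 2 (by norm_num))))) continuousAt_const) continuousAt_const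
  · exact ContinuousAt.mul continuousAt_const ((hDm.mul (by fun_prop)).div (hp 2) (hpn 2 (by norm_num)))

/-- exponential smallness of eigenfunctions in the forbidden region
[x_max, x_max+δ′] for eigenvalues κ ∈ (1/l², E+δ]. -/
theorem statement8 (M l a α : ℝ) (hM : 0 < M) (hl : 0 < l) (ha : |a| < l) (hα : α < 9/4)
    (rp : ℝ) (hrp : 0 < rp) (hrp0 : Dm M l a rp = 0)
    (hrppos : ∀ r, rp < r → 0 < Dm M l a r)
    (rmax : ℝ) (hrmax : rp < rmax)
    (hmax : ∀ r ∈ Set.Ici rp, r ≠ rmax → Vsig M l a r < Vsig M l a rmax)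
    (R : ℝ → ℝ) (hRmono : StrictMonoOn R (Set.Iio (π/2)))
    (hRim : R '' Set.Iio (π/2) = Set.Ioi rp)
    (hRderiv : ∀ x < π/2, HasDerivAt R (Dm M l a (R x) / ((R x)^2 + a^2)) x)
    (hRtop : Filter.Tendsto R (nhdsWithin (π/2) (Set.Iio (π/2))) Filter.atTop)
    (xmax : ℝ) (hxmax : xmax < π/2) (hRxmax : R xmax = rmax)
    (E δ : ℝ) (hE : E ∈ Set.Ioo (1/l^2) (Vsig M l a rmax)) (hδ : 0 < δ)
    (hEδ : Set.Icc (E - δ) (E + δ) ⊆ Set.Ioo (1/l^2) (Vsig M l a rmax)) :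
    ∃ D > 0, ∃ δ' > 0, xmax + δ' < π/2 ∧ ∃ H₀ > 0,
      ∀ h ∈ Set.Ioc 0 H₀, ∀ κ ∈ Set.Ioc (1/l^2) (E + δ), ∀ u : ℝ → ℝ,
        (∃ x ∈ Set.Ico xmax (π/2), u x ≠ 0) →
        ContDiffOn ℝ 2 u (Set.Ico xmax (π/2)) →
        (∀ x ∈ Set.Ioo xmax (π/2),
          -h^2 * deriv (deriv u) x + Vfull M l a α R h x * u x = κ * u x) →
        u xmax = 0 →
        MeasureTheory.IntegrableOn (fun x => (deriv u x)^2 + (R x)^2 * (u x)^2)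
          (Set.Ioo xmax (π/2)) →
        (∫ x in Set.Ioo xmax (xmax + δ'), ((deriv u x)^2 + (u x)^2))
          ≤ D * Real.exp (-D/h) * ∫ x in Set.Ioo xmax (π/2), (u x)^2 := by
  have hl2 : (0:ℝ) < 1/l^2 := by positivity
  have hVm : E + δ < Vsig M l a rmax := (hEδ ⟨by linarith, le_refl _⟩).2
  have hEδpos : (0:ℝ) < E + δ := lt_trans hl2 (hEδ ⟨by linarith, le_refl _⟩).1
  set Vm := Vsig M l a rmax with hVmdef
  set ε := (Vm - (E + δ))/2 with hεdef
  have hε : 0 < ε := by simp only [hεdef]; linarith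
  -- R x > rp for x < π/2
  have hRgt : ∀ x, x < π/2 → rp < R x := by
    intro x hx
    have : R x ∈ R '' Iio (π/2) := mem_image_of_mem R hx
    rw [hRim] at this; exact this
  have hRne : ∀ x, x < π/2 → ((R x)^2 + a^2) ≠ 0 := by
    intro x hx
    have h0 : 0 < R x := hrp.trans (hRgt x hx)
    positivity
  -- continuity of W := Vsig ∘ R on Iio (π/2)
  set W : ℝ → ℝ := fun x => Vsig M l a (R x) with hWdef
  set J : ℝ → ℝ := fun x => Vjunk M l a α (R x) + Vmass M l a α (R x) with hJdef
  have hWat : ∀ x, x < π/2 → ContinuousAt W x := by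
    intro x hx
    exact (contVsig M l a (hRne x hx)).comp (hRderiv x hx).continuousAt
  have hJat : ∀ x, x < π/2 → ContinuousAt J x := by
    intro x hx
    exact (contVJM M l a α (hRne x hx)).comp (hRderiv x hx).continuousAt
  -- choose δ₀ by continuity at xmax
  have hWx : W xmax = Vm := by simp [hWdef, hRxmax, hVmdef]
  have hev : ∀ᶠ x in 𝓝 xmax, Vm - ε < W x ∧ x < π/2 := by
    have h1 : ∀ᶠ x in 𝓝 xmax, Vm - ε < W x := by
      have := (hWat xmax hxmax)
      rw [ContinuousAt, hWx] at this
      exact this.eventually_const_lt (by linarith)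
    have h2 : ∀ᶠ x in 𝓝 xmax, x < π/2 := Filter.Tendsto.eventually_lt_const hxmax (by
      exact Filter.tendsto_id)
    exact h1.and h2
  obtain ⟨δ₀, hδ₀, hP⟩ := Metric.eventually_nhds_iff.mp hev
  set δ' := δ₀/4 with hδ'def
  have hδ' : 0 < δ' := by positivity
  set B : ℝ := xmax + 2*δ' with hBdef
  set B' : ℝ := xmax + 3*δ' with hB'def
  have hIccP : ∀ x ∈ Icc xmax B', (Vm - ε < W x ∧ x < π/2) := by
    intro x hx
    apply hP
    rw [Real.dist_eq, abs_of_nonneg (by linarith [hx.1])]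
    have := hx.2
    simp only [hB'def, hδ'def] at this ⊢
    linarith
  have hB'lt : B' < π/2 := (hIccP B' ⟨by simp [hB'def]; linarith, le_refl _⟩).2
  -- bounds for J and W on the compact interval
  have hJcont : ContinuousOn J (Icc xmax B') := fun x hx =>
    (hJat x (hIccP x hx).2).continuousWithinAt
  have hWcont : ContinuousOn W (Icc xmax B') := fun x hx =>
    (hWat x (hIccP x hx).2).continuousWithinAt
  obtain ⟨Cj0, hCj0⟩ := (isCompact_Icc (a := xmax) (b := B')).exists_bound_of_continuousOn hJcont
  obtain ⟨CV0, hCV0⟩ := (isCompact_Icc (a := xmax) (b := B')).exists_bound_of_continuousOn hWcont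
  set Cj := max Cj0 0 with hCjdef
  set CV := max CV0 0 with hCVdef
  have hCj : ∀ x ∈ Icc xmax B', |J x| ≤ Cj := fun x hx => (hCj0 x hx).trans (le_max_left _ _)
  have hCV : ∀ x ∈ Icc xmax B', |W x| ≤ CV := fun x hx => (hCV0 x hx).trans (le_max_left _ _)
  have hCjnn : 0 ≤ Cj := le_max_right _ _
  have hCVnn : 0 ≤ CV := le_max_right _ _
  set c := ε/2 with hcdef
  have hc : 0 < c := by positivity
  set H₁ : ℝ := min 1 (Real.sqrt (ε/(2*(Cj+1)))) with hH₁def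
  have hH₁ : 0 < H₁ := lt_min one_pos (Real.sqrt_pos.mpr (by positivity))
  have hH₁junk : ∀ h : ℝ, 0 < h → h ≤ H₁ → ∀ x ∈ Icc xmax B', |h^2 * J x| ≤ ε/2 := by
    intro h hh hhH x hx
    have h1 : h ≤ Real.sqrt (ε/(2*(Cj+1))) := hhH.trans (min_le_right _ _)
    have h2 : h^2 ≤ ε/(2*(Cj+1)) := by
      have := Real.sqrt_le_sqrt (le_of_eq rfl : ε/(2*(Cj+1)) ≤ ε/(2*(Cj+1)))
      nlinarith [Real.sq_sqrt (le_of_lt (show (0:ℝ) < ε/(2*(Cj+1)) by positivity)),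
        Real.sqrt_nonneg (ε/(2*(Cj+1)))]
    have h3 := hCj x hx
    rw [abs_mul, abs_of_nonneg (sq_nonneg h)]
    have hCj1 : (Cj+1) ≠ 0 := by positivity
    calc h^2 * |J x| ≤ (ε/(2*(Cj+1))) * (Cj+1) := by
          apply mul_le_mul h2 (by linarith) (abs_nonneg _) (by positivity)
      _ = ε/2 := by field_simp
  -- uniform bound C for |Vfull - κ|
  set C := CV + Cj + (E + δ) with hCdef
  have hCpos : 0 < C := by simp only [hCdef]; linarith
  set ρ := Real.sqrt (2*c) * δ' / 2 with hρdef
  have hρ : 0 < ρ := by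
    have : 0 < Real.sqrt (2*c) := Real.sqrt_pos.mpr (by linarith)
    positivity
  set K := (4/δ' + 3*δ'*C/2)^2 + 1 with hKdef
  have hK : 0 < K := by positivity
  set D := ρ/2 with hDdef
  have hD : 0 < D := by positivity
  -- smallness of K h⁻⁴ exp(-D/h)
  have htend : Tendsto (fun h : ℝ => K * (1/h^4) * Real.exp (-D/h)) (𝓝[>] (0:ℝ)) (𝓝 0) := by
    have h1 : Tendsto (fun h : ℝ => D/h) (𝓝[>] (0:ℝ)) atTop := by
      simp only [div_eq_mul_inv]
      exact Tendsto.const_mul_atTop hD tendsto_inv_nhdsGT_zero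
    have h2 := (tendsto_pow_mul_exp_neg_atTop_nhds_zero 4).comp h1
    have h3 : Tendsto (fun h : ℝ => (K/D^4) * ((D/h)^4 * Real.exp (-(D/h)))) (𝓝[>] (0:ℝ)) (𝓝 0) := by
      have := h2.const_mul (K/D^4)
      simpa using this
    apply h3.congr'
    filter_upwards [self_mem_nhdsWithin] with h hh
    have hh0 : (0:ℝ) < h := hh
    have hD4 : D^4 ≠ 0 := by positivity
    field_simp
  have hevh : ∀ᶠ h in 𝓝[>] (0:ℝ), K * (1/h^4) * Real.exp (-D/h) < D :=
    htend.eventually_lt_const hD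
  obtain ⟨η, hη, hPh⟩ := Metric.mem_nhdsWithin_iff.mp hevh
  set H₀ := min H₁ (η/2) with hH₀def
  have hH₀ : 0 < H₀ := lt_min hH₁ (by positivity)
  have hKD : ∀ h : ℝ, 0 < h → h ≤ H₀ → K * (1/h^4) * Real.exp (-D/h) ≤ D := by
    intro h hh hhH
    refine le_of_lt (hPh ⟨Metric.mem_ball.mpr ?_, hh⟩)
    rw [Real.dist_eq, sub_zero, abs_of_pos hh]
    have := hhH.trans (min_le_right _ _)
    linarith
  refine ⟨D, hD, δ', hδ', by simp only [hB'def] at hB'lt; linarith, H₀, hH₀, ?_⟩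
  rintro h ⟨hh0, hhH⟩ κ ⟨hκ1, hκ2⟩ u hune hC2 hode huA hint
  -- ===== inner part =====
  clear hune
  have hh1 : h ≤ 1 := hhH.trans ((min_le_left _ _).trans (min_le_left _ _))
  have hhH₁ : h ≤ H₁ := hhH.trans (min_le_left _ _)
  have h2pos : (0:ℝ) < h^2 := by positivity
  have hxB : xmax < B := by simp only [hBdef]; linarith
  have hBB' : B < B' := by simp only [hBdef, hB'def]; linarith
  have hVlow : ∀ x ∈ Icc xmax B', c ≤ Vfull M l a α R h x - κ := by
    intro x hx
    have h1 := (hIccP x hx).1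
    have h2 := abs_le.mp (hH₁junk h hh0 hhH₁ x hx)
    have h3 : Vfull M l a α R h x = W x + h^2 * J x := rfl
    have hVmε : Vm - ε = (E + δ) + ε := by rw [hεdef]; ring
    rw [h3, hcdef]
    linarith [h2.1]
  have hVabs : ∀ x ∈ Icc xmax B', |Vfull M l a α R h x - κ| ≤ C := by
    intro x hx
    have h1 := abs_le.mp (hCV x hx)
    have h2' : |h^2 * J x| ≤ Cj := by
      rw [abs_mul, abs_of_nonneg (sq_nonneg h)]
      have hh2 : h^2 ≤ 1 := by
        calc h^2 = h*h := sq h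
          _ ≤ 1*1 := mul_le_mul hh1 hh1 hh0.le one_pos.le
          _ = 1 := one_mul 1
      calc h^2*|J x| ≤ 1*|J x| := mul_le_mul_of_nonneg_right hh2 (abs_nonneg _)
        _ ≤ Cj := by rw [one_mul]; exact hCj x hx
    have b2 := abs_le.mp h2'
    have hκabs : |κ| ≤ E + δ := abs_le.mpr ⟨by linarith, hκ2⟩
    have b3 := abs_le.mp hκabs
    have h3 : Vfull M l a α R h x - κ = W x + h^2*J x - κ := rfl
    rw [h3, hCdef]
    apply abs_le.mpr
    constructor <;> linarith
  set lam := Real.sqrt (2*c) / h with hlamdef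
  have hlamnn : 0 ≤ lam := div_nonneg (Real.sqrt_nonneg _) hh0.le
  have hlamsq : lam^2 = 2*c/h^2 := by
    rw [hlamdef, div_pow, Real.sq_sqrt (by linarith)]
  -- regularity of u
  have hIccsub : Icc xmax B' ⊆ Ico xmax (π/2) := fun x hx => ⟨hx.1, lt_of_le_of_lt hx.2 hB'lt⟩
  have hsub2 : Ioo xmax B' ⊆ Ioo xmax (π/2) := fun x hx => ⟨hx.1, lt_trans hx.2 hB'lt⟩
  have hucont : ContinuousOn u (Ico xmax (π/2)) := hC2.continuousOn
  set v := derivWithin u (Ico xmax (π/2)) with hvdef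
  have hvcont : ContinuousOn v (Ico xmax (π/2)) :=
    hC2.continuousOn_derivWithin (uniqueDiffOn_Ico _ _) one_le_two
  have hveq : ∀ x ∈ Ioo xmax (π/2), v x = deriv u x := fun x hx =>
    derivWithin_of_mem_nhds (mem_of_superset (isOpen_Ioo.mem_nhds hx) Ioo_subset_Ico_self)
  have hC2' : ContDiffOn ℝ 2 u (Ioo xmax (π/2)) := hC2.mono Ioo_subset_Ico_self
  have hud : ∀ x ∈ Ioo xmax (π/2), HasDerivAt u (deriv u x) x := fun x hx =>
    ((hC2'.differentiableOn (by norm_num)).differentiableAt (isOpen_Ioo.mem_nhds hx)).hasDerivAt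
  have hu1 : ContDiffOn ℝ 1 (deriv u) (Ioo xmax (π/2)) :=
    hC2'.deriv_of_isOpen isOpen_Ioo (by norm_num)
  have hu'd : ∀ x ∈ Ioo xmax (π/2), HasDerivAt (deriv u) (deriv (deriv u) x) x := fun x hx =>
    ((hu1.differentiableOn (by norm_num)).differentiableAt (isOpen_Ioo.mem_nhds hx)).hasDerivAt
  have hode2 : ∀ x ∈ Ioo xmax (π/2),
      deriv (deriv u) x = (Vfull M l a α R h x - κ) * u x / h^2 := by
    intro x hx
    have h4 : h^2 * deriv (deriv u) x = (Vfull M l a α R h x - κ) * u x := by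
      have h5 := hode x hx
      linear_combination (-1 : ℝ) * h5
    rw [eq_div_iff (ne_of_gt h2pos)]
    linarith [h4]
  -- apply the comparison lemma
  obtain ⟨hFmono, hwmono⟩ := agmon_mono u v (deriv (deriv u)) xmax B' lam hlamnn
    (hucont.mono hIccsub) (hvcont.mono hIccsub)
    (fun x hx => by rw [hveq x (hsub2 hx)]; exact hud x (hsub2 hx))
    (fun x hx => by
      have hevq : v =ᶠ[𝓝 x] deriv u :=
        eventually_of_mem (isOpen_Ioo.mem_nhds (hsub2 hx)) (fun y hy => hveq y hy)
      exact (hu'd x (hsub2 hx)).congr_of_eventuallyEq hevq)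
    (fun x hx => by
      have hx' := hsub2 hx
      have hxI : x ∈ Icc xmax B' := Ioo_subset_Icc_self hx
      rw [hode2 x hx', hlamsq]
      have key : c*(u x)^2 ≤ (Vfull M l a α R h x - κ)*(u x)^2 :=
        mul_le_mul_of_nonneg_right (hVlow x hxI) (sq_nonneg _)
      rw [show 2*c/h^2*(u x)^2 = (2*(c*(u x)^2))/h^2 from by ring,
          show 2*u x*((Vfull M l a α R h x - κ)*u x/h^2)
            = (2*((Vfull M l a α R h x - κ)*(u x)^2))/h^2 from by ring]
      exact (div_le_div_iff_of_pos_right h2pos).mpr (by linarith))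
    huA
  have hBmem : B ∈ Icc xmax B' := ⟨hxB.le, hBB'.le⟩
  have hdecay : ∀ x ∈ Icc xmax B, (u x)^2 ≤ Real.exp (lam*(x-B)) * (u B)^2 := by
    intro x hx
    have hxI : x ∈ Icc xmax B' := ⟨hx.1, hx.2.trans hBB'.le⟩
    have hF := hFmono hxI hBmem hx.2
    have hep : (0:ℝ) < Real.exp (lam*x) := Real.exp_pos _
    calc (u x)^2 = Real.exp (lam*x) * (Real.exp (-(lam*x)) * (u x)^2) := by
          rw [← mul_assoc, ← Real.exp_add]; simp
      _ ≤ Real.exp (lam*x) * (Real.exp (-(lam*B)) * (u B)^2) :=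
          mul_le_mul_of_nonneg_left hF hep.le
      _ = Real.exp (lam*(x-B)) * (u B)^2 := by
          rw [← mul_assoc, ← Real.exp_add, show lam*x + -(lam*B) = lam*(x-B) from by ring]
  -- L² control of u
  set Iu := ∫ x in Ioo xmax (π/2), (u x)^2 with hIudef
  have hu2meas : AEStronglyMeasurable (fun x => (u x)^2) (volume.restrict (Ioo xmax (π/2))) :=
    ((hucont.mono Ioo_subset_Ico_self).pow 2).aestronglyMeasurable measurableSet_Ioo
  have hu2int : IntegrableOn (fun x => (u x)^2) (Ioo xmax (π/2)) := by
    apply Integrable.mono' (hint.const_mul (1/rp^2)) hu2meas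
    rw [ae_restrict_iff' measurableSet_Ioo]
    apply Eventually.of_forall
    intro x hx
    have hR := hRgt x hx.2
    have hR2 : rp^2 ≤ (R x)^2 := pow_le_pow_left₀ hrp.le hR.le 2
    have h5 : rp^2*(u x)^2 ≤ (deriv u x)^2 + (R x)^2*(u x)^2 := by
      have h51 := mul_le_mul_of_nonneg_right hR2 (sq_nonneg (u x))
      linarith [sq_nonneg (deriv u x), h51]
    rw [Real.norm_eq_abs, abs_of_nonneg (sq_nonneg _),
      show (1/rp^2) * ((deriv u x)^2 + (R x)^2*(u x)^2)
        = ((deriv u x)^2 + (R x)^2*(u x)^2)/rp^2 from by ring,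
      le_div_iff₀ (by positivity : (0:ℝ) < rp^2)]
    linarith [h5]
  have hIunn : 0 ≤ Iu := setIntegral_nonneg measurableSet_Ioo (fun x _ => sq_nonneg _)
  have hwB : (u B)^2 * δ' ≤ Iu := by
    have hsubBB : Ioo B B' ⊆ Ioo xmax (π/2) := fun x hx =>
      ⟨lt_trans hxB hx.1, lt_trans hx.2 hB'lt⟩
    have h6 : ∫ _x in Ioo B B', (u B)^2 ≤ ∫ x in Ioo B B', (u x)^2 := by
      apply setIntegral_mono_on
      · exact (integrableOn_const_iff).mpr (Or.inr (by rw [Real.volume_Ioo]; exact ENNReal.ofReal_lt_top))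
      · exact hu2int.mono_set hsubBB
      · exact measurableSet_Ioo
      · intro x hx
        exact hwmono hBmem ⟨(hxB.trans hx.1).le, hx.2.le⟩ hx.1.le
    have h7 : ∫ _x in Ioo B B', (u B)^2 = δ' * (u B)^2 := by
      rw [setIntegral_const, Real.volume_real_Ioo_of_le (by simp only [hBdef, hB'def]; linarith), smul_eq_mul]
      congr 1
      simp only [hBdef, hB'def]; ring
    have h8 : ∫ x in Ioo B B', (u x)^2 ≤ Iu :=
      setIntegral_mono_set hu2int (Eventually.of_forall (fun x => sq_nonneg _))
        (HasSubset.Subset.eventuallyLE hsubBB)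
    linarith [h6, h7 ▸ h6, h8]
  -- pointwise bounds
  set P := Real.sqrt ((u B)^2) with hPdef
  set E₁ := Real.exp (-(lam*δ'/4)) with hE₁def
  have hE₁P : 0 ≤ E₁ * P := mul_nonneg (Real.exp_pos _).le (Real.sqrt_nonneg _)
  set m : ℝ := xmax + δ' with hmdef
  set m' : ℝ := xmax + 3*δ'/2 with hm'def
  have hmm' : m < m' := by simp only [hmdef, hm'def]; linarith
  have hm'B : m' ≤ B := by simp only [hm'def, hBdef]; linarith
  have habs : ∀ t ∈ Icc xmax m', |u t| ≤ E₁ * P := by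
    intro t ht
    have htB : t ∈ Icc xmax B := ⟨ht.1, ht.2.trans hm'B⟩
    have h1 := hdecay t htB
    have h2 : Real.exp (lam*(t-B)) ≤ E₁^2 := by
      rw [hE₁def, ← Real.exp_nat_mul]
      apply Real.exp_le_exp.mpr
      have htm' : t ≤ m' := ht.2
      have : t - B ≤ -(δ'/2) := by simp only [hm'def, hBdef] at htm' ⊢; linarith
      have hh : (2:ℕ) * -(lam*δ'/4) = -(lam*δ'/2) := by push_cast; ring
      rw [hh]
      calc lam*(t-B) ≤ lam*(-(δ'/2)) := mul_le_mul_of_nonneg_left this hlamnn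
        _ = -(lam*δ'/2) := by ring
    have h3 : (u t)^2 ≤ (E₁*P)^2 := by
      have hP2 : P^2 = (u B)^2 := Real.sq_sqrt (sq_nonneg _)
      calc (u t)^2 ≤ Real.exp (lam*(t-B)) * (u B)^2 := h1
        _ ≤ E₁^2 * (u B)^2 := mul_le_mul_of_nonneg_right h2 (sq_nonneg _)
        _ = (E₁*P)^2 := by rw [mul_pow, hP2]
    calc |u t| = Real.sqrt ((u t)^2) := (Real.sqrt_sq_eq_abs _).symm
      _ ≤ Real.sqrt ((E₁*P)^2) := Real.sqrt_le_sqrt h3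
      _ = E₁*P := Real.sqrt_sq hE₁P
  -- mean value theorem on [m, m']
  have hIccm : Icc m m' ⊆ Ioo xmax (π/2) := by
    intro x hx
    constructor
    · have := hx.1; simp only [hmdef] at this; linarith
    · have := hx.2; simp only [hm'def] at this
      have : x ≤ B := le_trans hx.2 hm'B
      calc x ≤ B := this
        _ < B' := hBB'
        _ < π/2 := hB'lt
  obtain ⟨ξ, hξ, hslope⟩ := exists_hasDerivAt_eq_slope u (deriv u) hmm'
    (hucont.mono (fun x hx => Ioo_subset_Ico_self (hIccm hx)))
    (fun x hx => hud x (hIccm (Ioo_subset_Icc_self hx)))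
  have hξmem : ξ ∈ Icc m m' := Ioo_subset_Icc_self hξ
  have hξbd : |deriv u ξ| ≤ 4/δ' * (E₁*P) := by
    rw [hslope]
    have hmm : m ∈ Icc xmax m' := ⟨by simp only [hmdef]; linarith, hmm'.le⟩
    have hmm2 : m' ∈ Icc xmax m' := ⟨by simp only [hm'def]; linarith, le_refl _⟩
    have h1 : |u m' - u m| ≤ 2*(E₁*P) := by
      calc |u m' - u m| ≤ |u m'| + |u m| := abs_sub _ _
        _ ≤ E₁*P + E₁*P := add_le_add (habs m' hmm2) (habs m hmm)
        _ = 2*(E₁*P) := by ring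
    have h2 : m' - m = δ'/2 := by simp only [hmdef, hm'def]; ring
    rw [abs_div, h2, abs_of_pos (by positivity : (0:ℝ) < δ'/2)]
    rw [div_le_iff₀ (by positivity : (0:ℝ) < δ'/2)]
    calc |u m' - u m| ≤ 2*(E₁*P) := h1
      _ = 4/δ' * (E₁*P) * (δ'/2) := by field_simp; ring
  -- derivative bound on (xmax, m]
  set Q := 4/δ' + C*(3*δ'/2)/h^2 with hQdef
  have hQnn : 0 ≤ Q := by
    have h1 : 0 < 4/δ' := by positivity
    have h2 : 0 < C*(3*δ'/2)/h^2 := by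
      apply div_pos (mul_pos hCpos (by linarith)) h2pos
    rw [hQdef]
    linarith
  have hu'bd : ∀ x ∈ Ioc xmax m, |deriv u x| ≤ Q * (E₁*P) := by
    intro x hx
    have hxξ : x < ξ := lt_of_le_of_lt hx.2 hξ.1
    have hIccxξ : Icc x ξ ⊆ Ioo xmax (π/2) := by
      intro t ht
      refine ⟨lt_of_lt_of_le hx.1 ht.1, ?_⟩
      have h1 : t ≤ m' := ht.2.trans hξmem.2
      linarith [hm'B, hBB', hB'lt]
    have hIccxm' : Icc x ξ ⊆ Icc xmax m' := fun t ht =>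
      ⟨(lt_of_lt_of_le hx.1 ht.1).le, ht.2.trans hξmem.2⟩
    have hftc : ∫ t in x..ξ, ((Vfull M l a α R h t - κ) * u t / h^2)
        = deriv u ξ - deriv u x := by
      apply intervalIntegral.integral_eq_sub_of_hasDerivAt
      · intro t ht
        rw [uIcc_of_le hxξ.le] at ht
        have htI := hIccxξ ht
        have h10 := hu'd t htI
        rw [hode2 t htI] at h10
        exact h10
      · apply ContinuousOn.intervalIntegrable
        rw [uIcc_of_le hxξ.le]
        apply ContinuousOn.div_const
        apply ContinuousOn.mul
        · apply ContinuousOn.sub _ continuousOn_const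
          intro t ht
          have h7 : t < π/2 := (hIccxξ ht).2
          exact ((hWat t h7).add (continuousAt_const.mul (hJat t h7))).continuousWithinAt
        · exact hucont.mono (fun t ht => Ioo_subset_Ico_self (hIccxξ ht))
    have hbd : ‖∫ t in x..ξ, ((Vfull M l a α R h t - κ) * u t / h^2)‖
        ≤ (C*(E₁*P)/h^2) * |ξ - x| := by
      apply intervalIntegral.norm_integral_le_of_norm_le_const
      intro t ht
      rw [uIoc_of_le hxξ.le] at ht
      have htI : t ∈ Icc x ξ := Ioc_subset_Icc_self ht
      have htm' : t ∈ Icc xmax m' := hIccxm' htI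
      have htB' : t ∈ Icc xmax B' := ⟨htm'.1, htm'.2.trans (hm'B.trans hBB'.le)⟩
      have h1 := hVabs t htB'
      have h2 := habs t htm'
      rw [Real.norm_eq_abs, abs_div, abs_mul, abs_of_nonneg (sq_nonneg h)]
      apply div_le_div_of_nonneg_right _ (sq_nonneg h)
      exact mul_le_mul h1 h2 (abs_nonneg _) hCpos.le
    have h9 : deriv u x = deriv u ξ - ∫ t in x..ξ, ((Vfull M l a α R h t - κ) * u t / h^2) := by
      rw [hftc]; ring
    have hξx : |ξ - x| ≤ 3*δ'/2 := by
      rw [abs_of_pos (by linarith [hxξ] : (0:ℝ) < ξ - x)]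
      have h1 : ξ ≤ m' := hξmem.2
      have h2 : xmax < x := hx.1
      simp only [hm'def] at h1
      linarith
    calc |deriv u x| ≤ |deriv u ξ|
          + ‖∫ t in x..ξ, ((Vfull M l a α R h t - κ) * u t / h^2)‖ := by
          rw [h9, Real.norm_eq_abs]
          exact abs_sub _ _
      _ ≤ 4/δ'*(E₁*P) + (C*(E₁*P)/h^2) * (3*δ'/2) := by
          apply add_le_add hξbd
          calc ‖∫ t in x..ξ, ((Vfull M l a α R h t - κ) * u t / h^2)‖
              ≤ (C*(E₁*P)/h^2) * |ξ - x| := hbd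
            _ ≤ (C*(E₁*P)/h^2) * (3*δ'/2) := by
                apply mul_le_mul_of_nonneg_left hξx
                positivity
      _ = Q * (E₁*P) := by rw [hQdef]; ring
  -- pointwise bound for the integrand
  have hfin : ∀ x ∈ Ioo xmax m, (deriv u x)^2 + (u x)^2 ≤ (Q^2+1)*(E₁^2*(u B)^2) := by
    intro x hx
    have hxm : x ∈ Ioc xmax m := ⟨hx.1, hx.2.le⟩
    have hxm' : x ∈ Icc xmax m' := ⟨hx.1.le, by
      have := hx.2; simp only [hmdef] at this; simp only [hm'def]; linarith⟩
    have h1 := hu'bd x hxm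
    have h2 := habs x hxm'
    have hP2 : P^2 = (u B)^2 := Real.sq_sqrt (sq_nonneg _)
    have h3 : (deriv u x)^2 ≤ Q^2 * (E₁^2*(u B)^2) := by
      have := sq_le_sq' (by linarith [abs_nonneg (deriv u x), neg_abs_le (deriv u x)] : -(Q*(E₁*P)) ≤ deriv u x) (le_trans (le_abs_self _) h1)
      calc (deriv u x)^2 ≤ (Q*(E₁*P))^2 := this
        _ = Q^2*(E₁^2*(u B)^2) := by rw [mul_pow, mul_pow, hP2]
    have h4 : (u x)^2 ≤ 1 * (E₁^2*(u B)^2) := by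
      have := sq_le_sq' (by linarith [neg_abs_le (u x)] : -(E₁*P) ≤ u x) (le_trans (le_abs_self _) h2)
      calc (u x)^2 ≤ (E₁*P)^2 := this
        _ = 1*(E₁^2*(u B)^2) := by rw [mul_pow, hP2]; ring
    linarith [h3, h4]
  -- integrate
  have hintLHS : IntegrableOn (fun x => (deriv u x)^2 + (u x)^2) (Ioo xmax m) := by
    have hmeas : AEStronglyMeasurable (fun x => (deriv u x)^2 + (u x)^2)
        (volume.restrict (Ioo xmax m)) := by
      apply AEStronglyMeasurable.add
      · exact ((measurable_deriv u).pow_const 2).aestronglyMeasurable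
      · have hsubm : Ioo xmax m ⊆ Ico xmax (π/2) := fun t ht =>
          ⟨ht.1.le, by have := ht.2; simp only [hmdef] at this; linarith [hBB', hB'lt]⟩
        exact ((hucont.mono hsubm).pow 2).aestronglyMeasurable measurableSet_Ioo
    apply Integrable.mono' ((integrableOn_const_iff (C := (Q^2+1)*(E₁^2*(u B)^2))).mpr
      (Or.inr (by rw [Real.volume_Ioo]; exact ENNReal.ofReal_lt_top))) hmeas
    rw [ae_restrict_iff' measurableSet_Ioo]
    apply Eventually.of_forall
    intro x hx
    rw [Real.norm_eq_abs, abs_of_nonneg (by positivity)]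
    exact hfin x hx
  have hIbound : (∫ x in Ioo xmax m, ((deriv u x)^2 + (u x)^2))
      ≤ δ' * ((Q^2+1)*(E₁^2*(u B)^2)) := by
    have h6 : (∫ x in Ioo xmax m, ((deriv u x)^2 + (u x)^2))
        ≤ ∫ _x in Ioo xmax m, ((Q^2+1)*(E₁^2*(u B)^2)) := by
      apply setIntegral_mono_on hintLHS
        ((integrableOn_const_iff).mpr (Or.inr (by rw [Real.volume_Ioo]; exact ENNReal.ofReal_lt_top)))
        measurableSet_Ioo hfin
    have h7 : ∫ _x in Ioo xmax m, ((Q^2+1)*(E₁^2*(u B)^2))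
        = δ' * ((Q^2+1)*(E₁^2*(u B)^2)) := by
      rw [setIntegral_const, Real.volume_real_Ioo_of_le (by simp only [hmdef]; linarith), smul_eq_mul]
      congr 1
      simp only [hmdef]; ring
    linarith [h6, h7 ▸ h6]
  -- assemble
  have hE₁sq : E₁^2 = Real.exp (-(D/h)) * Real.exp (-(D/h)) := by
    rw [hE₁def, ← Real.exp_add, ← Real.exp_nat_mul]
    congr 1
    push_cast
    rw [hDdef, hρdef, hlamdef]
    field_simp
    ring
  have hQK : Q^2 + 1 ≤ K * (1/h^4) := by
    have hh2 : h^2 ≤ 1 := by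
      calc h^2 = h*h := sq h
        _ ≤ 1*1 := mul_le_mul hh1 hh1 hh0.le one_pos.le
        _ = 1 := one_mul 1
    have h1 : Q ≤ (4/δ' + 3*δ'*C/2)/h^2 := by
      rw [hQdef]
      have h11 : 4/δ' ≤ (4/δ')/h^2 := by
        rw [le_div_iff₀ h2pos]
        exact mul_le_of_le_one_right (by positivity) hh2
      have h12 : C*(3*δ'/2)/h^2 = (3*δ'*C/2)/h^2 := by ring
      rw [h12, add_div]
      linarith [h11]
    have h2 : Q^2 ≤ ((4/δ' + 3*δ'*C/2)/h^2)^2 := pow_le_pow_left₀ hQnn h1 2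
    have h3 : ((4/δ' + 3*δ'*C/2)/h^2)^2 = (4/δ' + 3*δ'*C/2)^2 * (1/h^4) := by
      rw [div_pow]; ring
    have h4 : (1:ℝ) ≤ 1/h^4 := by
      rw [le_div_iff₀ (by positivity)]
      calc 1*h^4 = (h^2)*(h^2) := by ring
        _ ≤ 1*1 := mul_le_mul hh2 hh2 (sq_nonneg h) one_pos.le
        _ = 1 := one_mul 1
    rw [hKdef]
    calc Q^2 + 1 ≤ (4/δ' + 3*δ'*C/2)^2 * (1/h^4) + 1/h^4 := by
          rw [← h3]; linarith [h2, h4]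
      _ = ((4/δ' + 3*δ'*C/2)^2 + 1) * (1/h^4) := by ring
  calc (∫ x in Ioo xmax m, ((deriv u x)^2 + (u x)^2))
      ≤ δ' * ((Q^2+1)*(E₁^2*(u B)^2)) := hIbound
    _ = (Q^2+1)*E₁^2*((u B)^2*δ') := by ring
    _ ≤ (Q^2+1)*E₁^2*Iu := by
        apply mul_le_mul_of_nonneg_left hwB
        positivity
    _ ≤ (K*(1/h^4)*Real.exp (-(D/h)))*Real.exp (-(D/h))*Iu := by
        apply mul_le_mul_of_nonneg_right _ hIunn
        rw [hE₁sq]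
        have := mul_le_mul_of_nonneg_right hQK (Real.exp_pos (-(D/h))).le
        calc (Q^2+1)*(Real.exp (-(D/h)) * Real.exp (-(D/h)))
            = ((Q^2+1)*Real.exp (-(D/h)))*Real.exp (-(D/h)) := by ring
          _ ≤ (K*(1/h^4)*Real.exp (-(D/h)))*Real.exp (-(D/h)) := by
              apply mul_le_mul_of_nonneg_right _ (Real.exp_pos _).le
              exact this
    _ ≤ D*Real.exp (-(D/h))*Iu := by
        apply mul_le_mul_of_nonneg_right _ hIunn
        apply mul_le_mul_of_nonneg_right _ (Real.exp_pos _).le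
        have := hKD h hh0 hhH
        calc K*(1/h^4)*Real.exp (-(D/h)) = K*(1/h^4)*Real.exp (-D/h) := by rw [neg_div]
          _ ≤ D := this
    _ = D*Real.exp (-D/h)*Iu := by rw [neg_div]
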